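/- Let a, b ∈ ℂ* be nonzero constants. The assignments p·x = x(s-1)a, q·x = x(s+1)b, r·x = 0, s·x = s·x(s) for x ∈ ℂ[s] define an H₄-module structure on ℂ[s] (denoted M_{(a,b)}). -/
import Mathlib


open Polynomial

/-- For nonzero constants a, b ∈ ℂ*, the assignments p·x = x(s-1)a,
q·x = x(s+1)b, r·x = 0, s·x = s·x(s) define an H₄-module structure on ℂ[s]
(the module M_{(a,b)}): the operators satisfy
[p,q] = r, [s,p] = p, [s,q] = -q, [r,·] = 0. -/
theorem stmt4 (a b : ℂ) (ha : a ≠ 0) (hb : b ≠ 0) :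
    ∀ (P Q R S : Module.End ℂ (Polynomial ℂ)),
      (∀ x, P x = Polynomial.aeval (Polynomial.X - Polynomial.C 1 : Polynomial ℂ) x *
          Polynomial.C a) →
      (∀ x, Q x = Polynomial.aeval (Polynomial.X + Polynomial.C 1 : Polynomial ℂ) x *
          Polynomial.C b) →
      (∀ x, R x = 0) →
      (∀ x, S x = Polynomial.X * x) →
      (⁅P, Q⁆ = R ∧ ⁅S, P⁆ = P ∧ ⁅S, Q⁆ = -Q ∧
        ⁅R, P⁆ = 0 ∧ ⁅R, Q⁆ = 0 ∧ ⁅R, S⁆ = 0) := by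
  intro P Q R S hP hQ hR hS
  refine ⟨?_, ?_, ?_, ?_, ?_, ?_⟩ <;>
    refine LinearMap.ext fun x => ?_ <;>
    simp only [Ring.lie_def, LinearMap.sub_apply, Module.End.mul_apply, hP, hQ, hR, hS,
      map_zero, LinearMap.zero_apply, LinearMap.neg_apply, map_mul, zero_mul, mul_zero,
      sub_zero, zero_sub, aeval_C, ← comp_eq_aeval, comp_assoc, neg_neg, sub_self]
  · simp [comp_assoc, sub_comp, add_comp, X_comp, C_comp, algebraMap_eq]
    ring
  · simp [sub_comp, X_comp, C_comp, algebraMap_eq]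
    ring
  · simp [add_comp, X_comp, C_comp, algebraMap_eq]
    ring
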